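/- Let μ be a finite positive Borel measure on [0,1] such that Σ_{k∈ℤ} |∫ e_k dμ|² < ∞, where e_k(x) = e^{2πikx}. Then the densely defined operator F from ℓ²(ℤ) to L²(μ), defined on finitely supported sequences by F((c_k)) = Σ_k c_k e_k, is closable. -/

import Mathlib

open MeasureTheory Filter Topology
open scoped InnerProductSpace ENNReal

set_option synthInstance.maxHeartbeats 1000000
set_option maxHeartbeats 1000000

/-- Let `μ` be a finite positive Borel measure on `[0,1]` such that
`Σ_{k∈ℤ} |∫ e_k dμ|² < ∞`, where `e_k x = exp(2πikx)`. Then the densely defined operator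
`F` from `ℓ²(ℤ)` to `L²(μ)`, defined on finitely supported sequences by
`F((c_k)) = Σ_k c_k e_k`, is closable. -/
theorem stmt2 (μ : Measure ℝ) [IsFiniteMeasure μ]
    (hsupp : μ (Set.Icc (0 : ℝ) 1)ᶜ = 0)
    (hsum : Summable fun k : ℤ =>
      ‖∫ x, Complex.exp (2 * Real.pi * Complex.I * (k : ℂ) * (x : ℂ)) ∂μ‖ ^ 2)
    (F : (lp (fun _ : ℤ => ℂ) 2) →ₗ.[ℂ] Lp ℂ 2 μ)
    (hdom : ∀ c : lp (fun _ : ℤ => ℂ) 2, c ∈ F.domain ↔ (Function.support ⇑c).Finite)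
    (hF : ∀ c : F.domain, ⇑(F c) =ᵐ[μ]
      fun x => ∑ᶠ k : ℤ,
        (↑(c : F.domain) : lp (fun _ : ℤ => ℂ) 2) k
          * Complex.exp (2 * Real.pi * Complex.I * (k : ℂ) * (x : ℂ))) :
    F.IsClosable := by
  classical
  -- the exponentials
  set e : ℤ → ℝ → ℂ := fun k x => Complex.exp (2 * Real.pi * Complex.I * (k : ℂ) * (x : ℂ))
    with he
  have hnorm : ∀ (k : ℤ) (x : ℝ), ‖e k x‖ = 1 := by
    intro k x
    have h1 : (2 * (Real.pi : ℂ) * Complex.I * (k : ℂ) * (x : ℂ))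
        = ((2 * Real.pi * k * x : ℝ) : ℂ) * Complex.I := by push_cast; ring
    simp only [he, h1, Complex.norm_exp_ofReal_mul_I]
  have hcont : ∀ k : ℤ, Continuous (e k) :=
    fun k => Complex.continuous_exp.comp (by continuity)
  have hmem : ∀ k : ℤ, MemLp (e k) 2 μ := fun k =>
    MemLp.of_bound ((hcont k).aestronglyMeasurable) 1
      (Eventually.of_forall fun x => le_of_eq (hnorm k x))
  set E : ℤ → Lp ℂ 2 μ := fun k => (hmem k).toLp (e k) with hE
  set a : ℤ → ℂ := fun m => ∫ x, e m x ∂μ with ha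
  -- conjugate-product identity
  have hconj : ∀ (k j : ℤ) (x : ℝ), (starRingEnd ℂ) (e k x) * e j x = e (j - k) x := by
    intro k j x
    simp only [he, ← Complex.exp_conj, ← Complex.exp_add]
    congr 1
    simp only [map_mul, Complex.conj_I, Complex.conj_ofReal, map_ofNat, map_intCast]
    push_cast
    ring
  -- inner products of the exponentials
  have hEE : ∀ k j : ℤ, ⟪E k, E j⟫_ℂ = a (j - k) := by
    intro k j
    rw [MeasureTheory.L2.inner_def]
    simp only [RCLike.inner_apply]
    rw [ha]
    refine integral_congr_ae ?_
    filter_upwards [(hmem k).coeFn_toLp, (hmem j).coeFn_toLp] with x h1 h2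
    rw [h1, h2, mul_comm, hconj]
  -- shifted summability
  have hsum' : ∀ k : ℤ, Summable fun j : ℤ => ‖a (j - k)‖ ^ 2 := by
    intro k
    exact (hsum.comp_injective (sub_left_injective (b := k)))
  -- the ℓ² sequences b_k
  have hb : ∀ k : ℤ, Memℓp (fun j : ℤ => (starRingEnd ℂ) (a (j - k))) 2 := by
    intro k
    apply memℓp_gen
    have h2 : (fun j : ℤ => ‖(starRingEnd ℂ) (a (j - k))‖ ^ (2 : ℝ≥0∞).toReal)
        = fun j : ℤ => ‖a (j - k)‖ ^ 2 := by
      funext j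
      rw [RCLike.norm_conj]
      norm_num
    rw [h2]
    exact hsum' k
  set B : ℤ → lp (fun _ : ℤ => ℂ) 2 := fun k => ⟨_, hb k⟩ with hB
  -- representation of F c as a finite sum in Lp
  have hrep : ∀ c : F.domain, (F c : Lp ℂ 2 μ)
      = ∑ j ∈ ((hdom ↑c).1 c.2).toFinset, ((↑c : lp (fun _ : ℤ => ℂ) 2) j) • E j := by
    intro c
    set s : Finset ℤ := ((hdom ↑c).1 c.2).toFinset with hs
    have hsupp' : Function.support (⇑(↑c : lp (fun _ : ℤ => ℂ) 2)) ⊆ ↑s := by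
      intro j hj
      simpa [hs] using hj
    -- coeFn of the finite sum
    have hsumcoe : ∀ (t : Finset ℤ),
        (⇑(∑ j ∈ t, ((↑c : lp (fun _ : ℤ => ℂ) 2) j) • E j) : ℝ → ℂ)
          =ᵐ[μ] fun x => ∑ j ∈ t, ((↑c : lp (fun _ : ℤ => ℂ) 2) j) * e j x := by
      intro t
      induction t using Finset.induction_on with
      | empty => simp only [Finset.sum_empty]; exact Lp.coeFn_zero (E := ℂ) 2 μ
      | @insert i t hi ih =>
        rw [Finset.sum_insert hi]
        filter_upwards [Lp.coeFn_add (((↑c : lp (fun _ : ℤ => ℂ) 2) i) • E i)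
          (∑ j ∈ t, ((↑c : lp (fun _ : ℤ => ℂ) 2) j) • E j),
          Lp.coeFn_smul ((↑c : lp (fun _ : ℤ => ℂ) 2) i) (E i), (hmem i).coeFn_toLp, ih]
          with x h1 h2 h3 h4
        simp only [h1, Pi.add_apply, h2, Pi.smul_apply, h3, h4, Finset.sum_insert hi,
          smul_eq_mul]
        rw [show (E i : ℝ → ℂ) x = e i x from h3]
    refine Lp.ext ?_
    filter_upwards [hF c, hsumcoe s] with x h1 h2
    rw [h1, h2]
    have : (Function.support fun k : ℤ => (↑c : lp (fun _ : ℤ => ℂ) 2) k * e k x) ⊆ ↑s := by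
      intro j hj
      apply hsupp'
      intro h0
      exact hj (by simp [Function.mem_support] at h0 ⊢; simp [h0])
    exact finsum_eq_finset_sum_of_support_subset _ this
  -- key identity: ⟪E k, F c⟫ = ⟪B k, ↑c⟫ in ℓ²
  have hkey : ∀ (k : ℤ) (c : F.domain), ⟪E k, (F c : Lp ℂ 2 μ)⟫_ℂ
      = ⟪B k, (↑c : lp (fun _ : ℤ => ℂ) 2)⟫_ℂ := by
    intro k c
    set s : Finset ℤ := ((hdom ↑c).1 c.2).toFinset with hs
    rw [hrep c, inner_sum]
    simp only [inner_smul_right, hEE]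
    rw [lp.inner_eq_tsum]
    have hval : ∀ j : ℤ, ⟪(B k) j, (↑c : lp (fun _ : ℤ => ℂ) 2) j⟫_ℂ
        = a (j - k) * (↑c : lp (fun _ : ℤ => ℂ) 2) j := by
      intro j
      simp [hB, RCLike.inner_apply]
      ring
    rw [tsum_congr hval]
    rw [tsum_eq_sum (s := s) (by
      intro j hj
      have : (↑c : lp (fun _ : ℤ => ℂ) 2) j = 0 := by
        by_contra h0
        exact hj (by simp [hs, Function.mem_support, h0])
      simp [this])]
    exact Finset.sum_congr rfl fun j _ => mul_comm _ _
  -- prove closability via the graph criterion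
  refine ⟨F.graph.topologicalClosure.toLinearPMap,
    (Submodule.toLinearPMap_graph_eq _ ?_).symm⟩
  rintro ⟨c₀, g⟩ hx hx0
  simp only at hx0
  subst hx0
  -- sequence in the graph converging to (0, g)
  have hx' : ((0 : lp (fun _ : ℤ => ℂ) 2), g) ∈ closure (F.graph : Set _) := by
    rwa [← Submodule.topologicalClosure_coe, SetLike.mem_coe]
  rcases mem_closure_iff_seq_limit.1 hx' with ⟨u, hu, hulim⟩
  choose d hd using fun n => (LinearPMap.mem_graph_iff F).1 (hu n)
  have h1 : Tendsto (fun n => (↑(d n) : lp (fun _ : ℤ => ℂ) 2)) atTop (𝓝 0) := by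
    have ht : Tendsto (fun n => (u n).1) atTop (𝓝 (0 : lp (fun _ : ℤ => ℂ) 2)) :=
      (continuous_fst.tendsto _).comp hulim
    exact ht.congr fun n => ((hd n).1).symm
  have h2 : Tendsto (fun n => (F (d n) : Lp ℂ 2 μ)) atTop (𝓝 g) := by
    have ht : Tendsto (fun n => (u n).2) atTop (𝓝 g) :=
      (continuous_snd.tendsto _).comp hulim
    exact ht.congr fun n => ((hd n).2).symm
  -- each ⟪E k, g⟫ = 0
  have hEg : ∀ k : ℤ, ⟪E k, g⟫_ℂ = 0 := by
    intro k
    have hA : Tendsto (fun n => ⟪E k, (F (d n) : Lp ℂ 2 μ)⟫_ℂ) atTop (𝓝 ⟪E k, g⟫_ℂ) :=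
      tendsto_const_nhds.inner h2
    have hC : Tendsto (fun n => ⟪E k, (F (d n) : Lp ℂ 2 μ)⟫_ℂ) atTop (𝓝 0) := by
      have : Tendsto (fun n => ⟪B k, (↑(d n) : lp (fun _ : ℤ => ℂ) 2)⟫_ℂ) atTop
          (𝓝 (⟪B k, (0 : lp (fun _ : ℤ => ℂ) 2)⟫_ℂ)) :=
        Filter.Tendsto.inner tendsto_const_nhds h1
      simp only [inner_zero_right] at this
      refine this.congr fun n => ?_
      exact (hkey k (d n)).symm
    exact tendsto_nhds_unique hA hC
  -- conclude ⟪g, g⟫ = 0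
  have hFg : ∀ n, ⟪(F (d n) : Lp ℂ 2 μ), g⟫_ℂ = 0 := by
    intro n
    rw [hrep (d n), sum_inner]
    simp [inner_smul_left, hEg]
  have hgg : Tendsto (fun n => ⟪(F (d n) : Lp ℂ 2 μ), g⟫_ℂ) atTop (𝓝 ⟪g, g⟫_ℂ) :=
    h2.inner tendsto_const_nhds
  have : ⟪g, g⟫_ℂ = 0 :=
    tendsto_nhds_unique hgg (by simpa [hFg] using tendsto_const_nhds (x := (0 : ℂ)))
  simpa using inner_self_eq_zero.1 this
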